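/- Let $\mathbf{\Gamma}$ be a class of sets (in zero-dimensional Polish spaces) closed under finite intersections and continuous preimages, let $X, Y$ be topological spaces, let $\kappa$ be finite, and let $A \in \mathbf{\Gamma}(X \times Y)$ be a union of $\kappa$ rectangles $A = \bigcup_{n<\kappa} A_n \times B_n$ (with arbitrary sides). Then $A$ is a union of at most $2^{2^\kappa}$ rectangles each of whose two sides belongs to $\mathbf{\Gamma}$. -/

import Mathlib

universe u

private lemma gamma_finite_iInter
    (Γ : ∀ (Z : Type u) [TopologicalSpace Z], Set (Set Z))
    (huniv : ∀ (Z : Type u) [TopologicalSpace Z], (Set.univ : Set Z) ∈ Γ Z)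
    (hinter : ∀ (Z : Type u) [TopologicalSpace Z], ∀ S ∈ Γ Z, ∀ T ∈ Γ Z, S ∩ T ∈ Γ Z)
    (Z : Type u) [TopologicalSpace Z] {ι : Type} [Fintype ι]
    (f : ι → Set Z) (hf : ∀ i, f i ∈ Γ Z) : (⋂ i, f i) ∈ Γ Z := by
  classical
  have h : ∀ s : Finset ι, (⋂ i ∈ s, f i) ∈ Γ Z := by
    intro s
    induction s using Finset.induction_on with
    | empty => simpa using huniv Z
    | insert a s hni ih =>
        rw [Finset.set_biInter_insert]
        exact hinter Z _ (hf _) _ ih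
  simpa using h Finset.univ

/-- Proposition 4.11: if `Γ` is a class of sets closed under finite intersections and
continuous preimages, and `A ∈ Γ(X × Y)` is a union of `κ` rectangles (`κ` finite), then
`A` is a union of at most `2^(2^κ)` rectangles whose sides are in `Γ`. -/
theorem finite_union_of_rectangles_in_Gamma
    (Γ : ∀ (Z : Type u) [TopologicalSpace Z], Set (Set Z))
    (huniv : ∀ (Z : Type u) [TopologicalSpace Z], (Set.univ : Set Z) ∈ Γ Z)
    (hinter : ∀ (Z : Type u) [TopologicalSpace Z], ∀ S ∈ Γ Z, ∀ T ∈ Γ Z, S ∩ T ∈ Γ Z)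
    (hpreim : ∀ (Z W : Type u) [TopologicalSpace Z] [TopologicalSpace W] (f : Z → W),
      Continuous f → ∀ S ∈ Γ W, f ⁻¹' S ∈ Γ Z)
    (X Y : Type u) [TopologicalSpace X] [TopologicalSpace Y]
    (κ : ℕ) (A : Set (X × Y)) (hA : A ∈ Γ (X × Y))
    (As : Fin κ → Set X) (Bs : Fin κ → Set Y)
    (hAeq : A = ⋃ n, As n ×ˢ Bs n) :
    ∃ (m : ℕ) (C : Fin m → Set X) (D : Fin m → Set Y),
      m ≤ 2 ^ (2 ^ κ) ∧ (∀ j, C j ∈ Γ X) ∧ (∀ j, D j ∈ Γ Y) ∧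
      A = ⋃ j, C j ×ˢ D j := by
  classical
  -- types of points
  set t : X → Set (Fin κ) := fun x => {n | x ∈ As n} with ht
  set st : Y → Set (Fin κ) := fun y => {n | y ∈ Bs n} with hst
  have memA : ∀ x y, ((x, y) ∈ A) ↔ ∃ n, n ∈ t x ∧ n ∈ st y := by
    intro x y
    simp [hAeq, t, st, Set.mem_iUnion]
  -- sections are in Γ
  have secY : ∀ x : X, {y | (x, y) ∈ A} ∈ Γ Y := by
    intro x
    have := hpreim Y (X × Y) (fun y => (x, y))
      (Continuous.prodMk continuous_const continuous_id) A hA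
    exact this
  have secX : ∀ y : Y, {x | (x, y) ∈ A} ∈ Γ X := by
    intro y
    have := hpreim X (X × Y) (fun x => (x, y))
      (Continuous.prodMk continuous_id continuous_const) A hA
    exact this
  -- index: realized types with nonempty section
  let ι : Type := {I : Set (Fin κ) // ∃ x, t x = I ∧ ∃ y, (x, y) ∈ A}
  -- witness point for each index
  have wspec : ∀ i : ι, t (Classical.choose i.2) = i.1 ∧
      ∃ y, (Classical.choose i.2, y) ∈ A := fun i => Classical.choose_spec i.2
  let xw : ι → X := fun i => Classical.choose i.2
  let D : ι → Set Y := fun i => {y | (xw i, y) ∈ A}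
  let C : ι → Set X := fun i => {x | ∀ y ∈ D i, (x, y) ∈ A}
  have hD : ∀ i, D i ∈ Γ Y := fun i => secY (xw i)
  have hC : ∀ i, C i ∈ Γ X := by
    intro i
    let g : Set (Fin κ) → Set X := fun J =>
      if h : ∃ y, y ∈ D i ∧ st y = J then {x | (x, Classical.choose h) ∈ A} else Set.univ
    have hg : ∀ J, g J ∈ Γ X := by
      intro J
      by_cases h : ∃ y, y ∈ D i ∧ st y = J
      · simpa [g, h] using secX (Classical.choose h)
      · simpa [g, h] using huniv X
    have hCeq : C i = ⋂ J, g J := by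
      ext x
      simp only [Set.mem_iInter, C, Set.mem_setOf_eq]
      constructor
      · intro hx J
        by_cases h : ∃ y, y ∈ D i ∧ st y = J
        · have := Classical.choose_spec h
          simpa [g, h] using hx _ this.1
        · simp [g, h]
      · intro hx y hy
        have h : ∃ y', y' ∈ D i ∧ st y' = st y := ⟨y, hy, rfl⟩
        have hxg : x ∈ g (st y) := hx (st y)
        simp only [g] at hxg
        rw [dif_pos h] at hxg
        have hspec := Classical.choose_spec h
        have hxg' : (x, Classical.choose h) ∈ A := hxg
        rw [memA] at hxg' ⊢
        obtain ⟨n, hn1, hn2⟩ := hxg'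
        exact ⟨n, hn1, by rw [hspec.2] at hn2; exact hn2⟩
    rw [hCeq]
    exact gamma_finite_iInter Γ huniv hinter X g hg
  -- A = union of C i ×ˢ D i
  have hAeq2 : A = ⋃ i : ι, C i ×ˢ D i := by
    ext ⟨x, y⟩
    simp only [Set.mem_iUnion, Set.mem_prod]
    constructor
    · intro hxy
      refine ⟨⟨t x, x, rfl, y, hxy⟩, ?_, ?_⟩
      · -- x ∈ C i
        intro y' hy'
        set i : ι := ⟨t x, x, rfl, y, hxy⟩
        have hw : t (xw i) = t x := (wspec i).1
        have : (xw i, y') ∈ A := hy'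
        rw [memA] at this ⊢
        obtain ⟨n, hn1, hn2⟩ := this
        rw [hw] at hn1
        exact ⟨n, hn1, hn2⟩
      · -- y ∈ D i
        set i : ι := ⟨t x, x, rfl, y, hxy⟩
        have hw : t (xw i) = t x := (wspec i).1
        show (xw i, y) ∈ A
        rw [memA] at hxy ⊢
        obtain ⟨n, hn1, hn2⟩ := hxy
        rw [← hw] at hn1
        exact ⟨n, hn1, hn2⟩
    · rintro ⟨i, hx, hy⟩
      exact hx y hy
  -- cardinality
  have hcard : Fintype.card ι ≤ 2 ^ (2 ^ κ) := by
    calc Fintype.card ι ≤ Fintype.card (Set (Fin κ)) := Fintype.card_subtype_le _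
    _ = 2 ^ κ := by rw [Fintype.card_set, Fintype.card_fin]
    _ ≤ 2 ^ (2 ^ κ) := Nat.pow_le_pow_right (by norm_num) (Nat.lt_two_pow_self (n := κ)).le
  -- reindex by Fin m
  let e := (Fintype.equivFin ι).symm
  refine ⟨Fintype.card ι, fun j => C (e j), fun j => D (e j), hcard,
    fun j => hC _, fun j => hD _, ?_⟩
  ext p
  simp only [hAeq2, Set.mem_iUnion]
  constructor
  · rintro ⟨i, hi⟩
    exact ⟨e.symm i, by simpa using hi⟩
  · rintro ⟨j, hj⟩
    exact ⟨e j, hj⟩
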